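/- Let r > 0, δ > 0, σ > 0, K > 0, with β₁ > 1 the larger root of (σ²/2)γ(γ−1) + (r−δ)γ − r = 0, and h* = β₁K/(β₁−1). Define V(x) = (h*/β₁)(x/h*)^{β₁} for 0 < x ≤ h* and V(x) = x − K for x ≥ h*. Then V is continuously differentiable, convex, nondecreasing on (0, ∞), and V(x) ≥ (x − K)⁺ for all x > 0, with strict inequality for 0 < x < h*. -/

import Mathlib

open Set

/-- The glued perpetual American call value function is C¹ on `(0,∞)`, convex,
nondecreasing, dominates the payoff `(x − K)⁺`, strictly so on `(0, h*)`. -/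
theorem stmt_13 (r δ σ K β1 : ℝ) (hr : 0 < r) (hδ : 0 < δ) (hσ : 0 < σ) (hK : 0 < K)
    (hroot : σ^2/2 * β1 * (β1 - 1) + (r - δ) * β1 - r = 0) (hβ1 : 1 < β1) :
    let h : ℝ := β1 * K / (β1 - 1)
    let V : ℝ → ℝ := fun x => if x ≤ h then (h / β1) * (x / h) ^ β1 else x - K
    ContDiffOn ℝ 1 V (Set.Ioi 0) ∧ ConvexOn ℝ (Set.Ioi 0) V ∧
    MonotoneOn V (Set.Ioi 0) ∧
    (∀ x : ℝ, 0 < x → V x ≥ max (x - K) 0) ∧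
    (∀ x : ℝ, 0 < x → x < h → V x > max (x - K) 0) := by
  intro h V
  have hb1 : (0:ℝ) < β1 - 1 := by linarith
  have hb0 : (0:ℝ) < β1 := by linarith
  have hh0 : 0 < h := div_pos (mul_pos hb0 hK) hb1
  have hhK : K < h := by
    rw [show h = β1 * K / (β1 - 1) from rfl, lt_div_iff₀ hb1]; nlinarith
  have hkey : h / β1 = h - K := by
    rw [show h = β1 * K / (β1 - 1) from rfl]
    field_simp
    ring
  set φ : ℝ → ℝ := fun x => min ((x / h) ^ (β1 - 1)) 1 with hφdef
  set W : ℝ → ℝ := fun y => (h / β1) * (y / h) ^ β1 with hWdef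
  -- derivative of the power piece
  have hW : ∀ x : ℝ, 0 < x → HasDerivAt W ((x / h) ^ (β1 - 1)) x := by
    intro x hx
    have h1 : HasDerivAt (fun y : ℝ => y / h) (1 / h) x := (hasDerivAt_id x).div_const h
    have h2 := (Real.hasDerivAt_rpow_const (p := β1)
      (Or.inl (div_pos hx hh0).ne')).comp x h1
    have h3 := h2.const_mul (h / β1)
    exact h3.congr_deriv (by field_simp)
  have hWh : W h = h - K := by
    simp only [hWdef, div_self hh0.ne', Real.one_rpow, mul_one, hkey]
  -- derivative of V
  have hV : ∀ x : ℝ, 0 < x → HasDerivAt V (φ x) x := by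
    intro x hx
    rcases lt_trichotomy x h with hl | he | hg
    · have hmin : φ x = (x / h) ^ (β1 - 1) :=
        min_eq_left (Real.rpow_le_one (by positivity)
          (by rw [div_le_one hh0]; linarith) hb1.le)
      rw [hmin]
      refine (hW x hx).congr_of_eventuallyEq ?_
      filter_upwards [Iio_mem_nhds hl] with y hy
      simp only [V, if_pos (le_of_lt (mem_Iio.mp hy)), hWdef]
    · have hφh : φ x = 1 := by
        simp [hφdef, he, div_self hh0.ne', Real.one_rpow]
      rw [hφh, he]
      have hleft : HasDerivWithinAt V 1 (Iic h) h := by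
        have : HasDerivAt W 1 h := by
          have := hW h hh0
          simpa [div_self hh0.ne', Real.one_rpow] using this
        exact this.hasDerivWithinAt.congr
          (fun y hy => by simp only [V, if_pos (mem_Iic.mp hy)]; rfl)
          (by simp only [V, if_pos le_rfl]; rfl)
      have hright : HasDerivWithinAt V 1 (Ici h) h := by
        have : HasDerivAt (fun y : ℝ => y - K) 1 h := (hasDerivAt_id h).sub_const K
        refine this.hasDerivWithinAt.congr (fun y hy => ?_) ?_
        · rcases eq_or_lt_of_le (mem_Ici.mp hy) with hEq | hlt
          · simp only [V, ← hEq, if_pos le_rfl]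
            rw [show (h / β1) * (h / h) ^ β1 = W h from rfl, hWh]
          · simp only [V, if_neg (not_le.mpr hlt)]
        · simp only [V, if_pos le_rfl]
          rw [show (h / β1) * (h / h) ^ β1 = W h from rfl, hWh]
      have := hleft.union hright
      rw [Iic_union_Ici] at this
      exact this.hasDerivAt (by simp)
    · have hmin : φ x = 1 :=
        min_eq_right (Real.one_le_rpow (by rw [le_div_iff₀ hh0]; linarith) hb1.le)
      rw [hmin]
      have : HasDerivAt (fun y : ℝ => y - K) 1 x := (hasDerivAt_id x).sub_const K
      refine this.congr_of_eventuallyEq ?_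
      filter_upwards [Ioi_mem_nhds hg] with y hy
      simp only [V, if_neg (not_le.mpr (mem_Ioi.mp hy))]
  have hdiff : DifferentiableOn ℝ V (Ioi 0) :=
    fun x hx => (hV x hx).differentiableAt.differentiableWithinAt
  have hderiv_eq : EqOn (deriv V) φ (Ioi 0) := fun x hx => (hV x hx).deriv
  have hcontφ : ContinuousOn φ (Ioi 0) := by
    exact ContinuousOn.inf ((continuousOn_id.div_const h).rpow_const
      fun x hx => Or.inl (div_pos (mem_Ioi.mp hx) hh0).ne') continuousOn_const
  have hmonoφ : MonotoneOn φ (Ioi 0) := by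
    intro a ha b _ hab
    refine min_le_min (Real.rpow_le_rpow (div_nonneg (le_of_lt ha) hh0.le) ?_ hb1.le) le_rfl
    gcongr
  have hφnn : ∀ x ∈ Ioi (0:ℝ), 0 ≤ φ x := fun x hx =>
    le_min (Real.rpow_nonneg (div_nonneg (le_of_lt hx) hh0.le) _) zero_le_one
  -- strict domination on (0, h)
  have hstrict : ∀ x : ℝ, 0 < x → x < h → W x > max (x - K) 0 := by
    intro x hx hxh
    set g : ℝ → ℝ := fun y => W y - (y - K) with hgdef
    have hg' : ∀ y : ℝ, 0 < y → HasDerivAt g ((y / h) ^ (β1 - 1) - 1) y :=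
      fun y hy => (hW y hy).sub ((hasDerivAt_id y).sub_const K)
    have hgh : g h = 0 := by simp [hgdef, hWh]
    have hanti : StrictAntiOn g (Icc x h) := by
      refine strictAntiOn_of_deriv_neg (convex_Icc x h)
        (fun y hy => (hg' y (lt_of_lt_of_le hx hy.1)).continuousAt.continuousWithinAt)
        (fun y hy => ?_)
      rw [interior_Icc] at hy
      rw [(hg' y (hx.trans hy.1)).deriv]
      have : (y / h) ^ (β1 - 1) < 1 :=
        Real.rpow_lt_one (div_nonneg (hx.trans hy.1).le hh0.le)
          (by rw [div_lt_one hh0]; exact hy.2) hb1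
      linarith
    have hgx : 0 < g x := by
      have := hanti (left_mem_Icc.mpr hxh.le) (right_mem_Icc.mpr hxh.le) hxh
      rw [hgh] at this; linarith
    have hWpos : 0 < W x := by
      have : 0 < (x / h) ^ β1 := Real.rpow_pos_of_pos (div_pos hx hh0) _
      positivity
    have : x - K < W x := by simp only [hgdef] at hgx; linarith
    exact max_lt this hWpos
  refine ⟨?_, ?_, ?_, ?_, ?_⟩
  · exact (contDiffOn_succ_iff_deriv_of_isOpen (n := 0) isOpen_Ioi).mpr
      ⟨hdiff, by simp, contDiffOn_zero.mpr (hcontφ.congr hderiv_eq)⟩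
  · refine MonotoneOn.convexOn_of_deriv (convex_Ioi 0) hdiff.continuousOn ?_ ?_
    · rw [interior_Ioi]; exact hdiff
    · rw [interior_Ioi]
      intro a ha b hb hab
      rw [hderiv_eq ha, hderiv_eq hb]
      exact hmonoφ ha hb hab
  · refine monotoneOn_of_deriv_nonneg (convex_Ioi 0) hdiff.continuousOn ?_ ?_
    · rw [interior_Ioi]; exact hdiff
    · rw [interior_Ioi]
      intro x hx
      rw [hderiv_eq hx]
      exact hφnn x hx
  · intro x hx
    rcases le_or_gt x h with hxh | hxh
    · rcases eq_or_lt_of_le hxh with hEq | hlt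
      · have hVh : V x = h - K := by
          rw [hEq]; simp only [V, if_pos le_rfl]
          rw [show h / β1 * (h / h) ^ β1 = W h from rfl, hWh]
        rw [hVh, hEq]
        exact max_le le_rfl (by linarith)
      · exact le_of_lt (by simpa only [V, if_pos hxh] using hstrict x hx hlt)
    · simp only [V, if_neg (not_le.mpr hxh)]
      exact max_le le_rfl (by linarith)
  · intro x hx hxh
    simpa only [V, if_pos hxh.le] using hstrict x hx hxh
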